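/- arXiv:0805.4563 — 4 statements merged into one kernel-verified Lean document; each statement's English description precedes it below -/
import Mathlib

section
/- Let G be a finite group, H ≤ G, and V a complex irreducible representation of G with dim V^H = 1. Let V appear in the permutation representation of G on G/H. Then f_{H,V} C[G] f_{H,V} is a one-dimensional complex vector space, where f_{H,V} = p_H e_V with e_V the central idempotent of C[G] corresponding to V. -/
open LinearMap Module

/-- Elementary Schur: an endomorphism commuting with an irreducible action is scalar. -/
lemma schur_scalar {G : Type} [Group G] {V : Type} [AddCommGroup V] [Module ℂ V]
    [FiniteDimensional ℂ V] (ρ : Representation ℂ G V)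
    (hirr : ∀ U : Submodule ℂ V, (∀ g : G, ∀ x ∈ U, ρ g x ∈ U) → U = ⊥ ∨ U = ⊤)
    (hV : Nontrivial V)
    (T : Module.End ℂ V) (hT : ∀ g : G, ρ g * T = T * ρ g) :
    ∃ c : ℂ, T = c • (1 : Module.End ℂ V) := by
  obtain ⟨c, hc⟩ := Module.End.exists_eigenvalue T
  obtain ⟨v, hv⟩ := hc.exists_hasEigenvector
  refine ⟨c, ?_⟩
  set U : Submodule ℂ V := LinearMap.ker (T - c • (1 : Module.End ℂ V)) with hU
  have hmem : ∀ x, x ∈ U ↔ T x = c • x := by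
    intro x
    simp [hU, LinearMap.mem_ker, sub_eq_zero]
  have hinv : ∀ g : G, ∀ x ∈ U, ρ g x ∈ U := by
    intro g x hx
    rw [hmem] at hx ⊢
    have := congrArg (fun f : Module.End ℂ V => f x) (hT g)
    simp only [Module.End.mul_apply] at this
    rw [← this, hx, map_smul]
  have hne : U ≠ ⊥ := by
    intro h
    have hvU : v ∈ U := by
      rw [hmem]
      exact hv.apply_eq_smul
    rw [h, Submodule.mem_bot] at hvU
    exact hv.2 hvU
  have hTop : U = ⊤ := (hirr U hinv).resolve_left hne
  ext x
  have hx : x ∈ U := hTop ▸ Submodule.mem_top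
  rw [hmem] at hx
  simpa using hx

/-- Averaged conjugation of any endomorphism is a scalar given by the normalized trace. -/
lemma avg_conj_eq_smul_one {G : Type} [Group G] [Fintype G] {V : Type} [AddCommGroup V]
    [Module ℂ V] [FiniteDimensional ℂ V] (ρ : Representation ℂ G V)
    (hirr : ∀ U : Submodule ℂ V, (∀ g : G, ∀ x ∈ U, ρ g x ∈ U) → U = ⊥ ∨ U = ⊤)
    (hV : Nontrivial V) (B : Module.End ℂ V) :
    ∑ g : G, ρ g * B * ρ g⁻¹
      = (((Fintype.card G : ℂ) * trace ℂ V B) / (finrank ℂ V : ℂ)) • (1 : Module.End ℂ V) := by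
  have hd : (finrank ℂ V : ℂ) ≠ 0 := by
    exact_mod_cast Nat.cast_ne_zero.mpr (finrank_pos (R := ℂ) (M := V)).ne'
  set T : Module.End ℂ V := ∑ g : G, ρ g * B * ρ g⁻¹ with hTdef
  have hcomm : ∀ h : G, ρ h * T = T * ρ h := by
    intro h
    rw [hTdef, Finset.mul_sum, Finset.sum_mul]
    refine Fintype.sum_equiv (Equiv.mulLeft h) _ _ ?_
    intro g
    simp only [Equiv.coe_mulLeft]
    have hg : (h * g)⁻¹ * h = g⁻¹ := by group
    calc ρ h * (ρ g * B * ρ g⁻¹) = ρ (h * g) * B * ρ g⁻¹ := by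
          rw [← mul_assoc, ← mul_assoc, ← map_mul]
      _ = ρ (h * g) * B * ρ (h * g)⁻¹ * ρ h := by
          rw [mul_assoc (ρ (h * g) * B), ← map_mul, hg, mul_assoc]
  obtain ⟨c, hc⟩ := schur_scalar ρ hirr hV T hcomm
  have htr : trace ℂ V T = (Fintype.card G : ℂ) * trace ℂ V B := by
    rw [hTdef, map_sum]
    have : ∀ g : G, trace ℂ V (ρ g * B * ρ g⁻¹) = trace ℂ V B := by
      intro g
      rw [trace_mul_comm, ← mul_assoc, ← map_mul, inv_mul_cancel, map_one, one_mul]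
    simp [this, Finset.card_univ]
  have htr' : trace ℂ V T = c * (finrank ℂ V : ℂ) := by
    rw [hc, map_smul, trace_one, smul_eq_mul]
  have hcval : c = (Fintype.card G : ℂ) * trace ℂ V B / (finrank ℂ V : ℂ) := by
    have h2 : c * (finrank ℂ V : ℂ) = (Fintype.card G : ℂ) * trace ℂ V B := by
      rw [← htr', htr]
    rw [← h2, mul_div_assoc, div_self hd, mul_one]
  rw [hc, hcval]

lemma sum_char_smul {G : Type} [Group G] [Fintype G] {V : Type} [AddCommGroup V]
    [Module ℂ V] [FiniteDimensional ℂ V] (ρ : Representation ℂ G V)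
    (hirr : ∀ U : Submodule ℂ V, (∀ g : G, ∀ x ∈ U, ρ g x ∈ U) → U = ⊥ ∨ U = ⊤)
    (hV : Nontrivial V) :
    ∑ g : G, (trace ℂ V (ρ g⁻¹)) • (ρ g : Module.End ℂ V)
      = ((Fintype.card G : ℂ) / (finrank ℂ V : ℂ)) • (1 : Module.End ℂ V) := by
  ext v
  simp only [LinearMap.sum_apply, LinearMap.smul_apply, Module.End.one_apply]
  classical
  let b := Module.Free.chooseBasis ℂ V
  have htr : ∀ g : G, trace ℂ V (ρ g⁻¹) = ∑ i, b.repr (ρ g⁻¹ (b i)) i := by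
    intro g
    rw [trace_eq_matrix_trace ℂ b, Matrix.trace]
    simp [Matrix.diag, LinearMap.toMatrix_apply]
  calc ∑ g : G, trace ℂ V (ρ g⁻¹) • ρ g v
      = ∑ g : G, ∑ i, (b.repr (ρ g⁻¹ (b i)) i) • ρ g v := by
        refine Finset.sum_congr rfl fun g _ => ?_
        rw [htr g, Finset.sum_smul]
    _ = ∑ i, ∑ g : G, (b.repr (ρ g⁻¹ (b i)) i) • ρ g v := Finset.sum_comm
    _ = ∑ i, ((Fintype.card G : ℂ) * (b.repr v i) / (finrank ℂ V : ℂ)) • b i := by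
        refine Finset.sum_congr rfl fun i _ => ?_
        set B : Module.End ℂ V := dualTensorHom ℂ V V (b.coord i ⊗ₜ[ℂ] v) with hB
        have hBapp : ∀ x, B x = (b.repr x i) • v := by
          intro x
          rw [hB, dualTensorHom_apply, Basis.coord_apply]
        have h1 : ∀ g : G, (b.repr (ρ g⁻¹ (b i)) i) • ρ g v = (ρ g * B * ρ g⁻¹) (b i) := by
          intro g
          simp only [Module.End.mul_apply, hBapp, map_smul]
        have h2 : trace ℂ V B = b.repr v i := by
          rw [hB, trace_eq_contract_apply, contractLeft_apply, Basis.coord_apply]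
        rw [Finset.sum_congr rfl fun g _ => h1 g, ← LinearMap.sum_apply,
          avg_conj_eq_smul_one ρ hirr hV B, h2, LinearMap.smul_apply, Module.End.one_apply]
    _ = ((Fintype.card G : ℂ) / (finrank ℂ V : ℂ)) • v := by
        have hterm : ∀ i, ((Fintype.card G : ℂ) * (b.repr v i) / (finrank ℂ V : ℂ)) • b i
            = ((Fintype.card G : ℂ) / (finrank ℂ V : ℂ)) • ((b.repr v i) • b i) := by
          intro i
          rw [smul_smul]
          congr 1
          ring
        rw [Finset.sum_congr rfl fun i _ => hterm i, ← Finset.smul_sum, Basis.sum_repr]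

lemma mul_eV_eq {G : Type} [Group G] [Fintype G] {V : Type} [AddCommGroup V]
    [Module ℂ V] [FiniteDimensional ℂ V] (ρ : Representation ℂ G V)
    (a : MonoidAlgebra ℂ G) :
    a * (((finrank ℂ V : ℂ) / (Fintype.card G : ℂ)) •
        ∑ g : G, (trace ℂ V (ρ g⁻¹)) • MonoidAlgebra.of ℂ G g)
      = ((finrank ℂ V : ℂ) / (Fintype.card G : ℂ)) •
        ∑ y : G, (trace ℂ V (ρ y⁻¹ * Representation.asAlgebraHom ρ a)) •
          MonoidAlgebra.of ℂ G y := by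
  classical
  induction a using MonoidAlgebra.induction_linear with
  | zero => simp
  | add f g hf hg =>
      rw [add_mul, hf, hg]
      simp only [map_add, mul_add, add_smul, Finset.sum_add_distrib, smul_add]
  | single x r =>
      rw [mul_smul_comm, Finset.mul_sum]
      congr 1
      refine Fintype.sum_equiv (Equiv.mulLeft x) _ _ ?_
      intro g
      simp only [Equiv.coe_mulLeft, MonoidAlgebra.of_apply]
      rw [mul_smul_comm, MonoidAlgebra.single_mul_single, mul_one,
        Representation.asAlgebraHom_single, mul_smul_comm, map_smul]
      have hgx : (x * g)⁻¹ * x = g⁻¹ := by group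
      rw [← map_mul, hgx]
      simp [MonoidAlgebra.smul_single', smul_eq_mul, mul_comm]

/-- For a complex irreducible representation `V` of `G` and `H ≤ G` with `dim V^H = 1`
(so that `V` appears in the permutation representation on `G/H`), the space
`f_{H,V} ℂ[G] f_{H,V}` is one-dimensional, where `f_{H,V} = p_H e_V` with `e_V` the central
idempotent of `ℂ[G]` corresponding to `V`. -/
theorem stmt_8 (G : Type) [Group G] [Fintype G] (H : Subgroup G) [DecidablePred (· ∈ H)]
    (V : Type) [AddCommGroup V] [Module ℂ V] [FiniteDimensional ℂ V]
    (ρ : Representation ℂ G V)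
    (hirr : ∀ U : Submodule ℂ V, (∀ g : G, ∀ x ∈ U, ρ g x ∈ U) → U = ⊥ ∨ U = ⊤)
    (hV : Nontrivial V)
    (hfix : Module.finrank ℂ
      ↥(⨅ h : H, LinearMap.eqLocus (ρ (h : G)) (LinearMap.id : V →ₗ[ℂ] V)) = 1)
    (p : MonoidAlgebra ℂ G)
    (hp : p = (Fintype.card H : ℂ)⁻¹ • ∑ h : H, MonoidAlgebra.of ℂ G (h : G))
    (eV : MonoidAlgebra ℂ G)
    (heV : eV = ((Module.finrank ℂ V : ℂ) / (Fintype.card G : ℂ)) •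
      ∑ g : G, (LinearMap.trace ℂ V (ρ g⁻¹)) • MonoidAlgebra.of ℂ G g) :
    Module.finrank ℂ
      ↥(Submodule.span ℂ
        {x : MonoidAlgebra ℂ G | ∃ a : MonoidAlgebra ℂ G, x = (p * eV) * a * (p * eV)}) = 1 := by
  classical
  have hcardH : (Fintype.card H : ℂ) ≠ 0 := Nat.cast_ne_zero.mpr Fintype.card_ne_zero
  have hcardG : (Fintype.card G : ℂ) ≠ 0 := Nat.cast_ne_zero.mpr Fintype.card_ne_zero
  have hd : (finrank ℂ V : ℂ) ≠ 0 :=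
    Nat.cast_ne_zero.mpr (finrank_pos (R := ℂ) (M := V)).ne'
  set K : Submodule ℂ V :=
    ⨅ h : H, LinearMap.eqLocus (ρ (h : G)) (LinearMap.id : V →ₗ[ℂ] V) with hK
  set π : Module.End ℂ V := Representation.asAlgebraHom ρ p with hπ
  -- π applied pointwise
  have hπ_apply : ∀ x : V, π x = (Fintype.card H : ℂ)⁻¹ • ∑ h : H, ρ (h : G) x := by
    intro x
    rw [hπ, hp, map_smul, map_sum, LinearMap.smul_apply, LinearMap.sum_apply]
    simp only [MonoidAlgebra.of_apply, Representation.asAlgebraHom_single_one]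
  -- π maps into K
  have hmemK : ∀ x : V, π x ∈ K := by
    intro x
    rw [hK, Submodule.mem_iInf]
    intro h₀
    rw [LinearMap.mem_eqLocus, LinearMap.id_apply]
    rw [hπ_apply x, map_smul, map_sum]
    congr 1
    refine Fintype.sum_equiv (Equiv.mulLeft h₀) _ _ ?_
    intro h
    simp only [Equiv.coe_mulLeft]
    have : ρ (h₀ : G) (ρ (h : G) x) = ρ ((h₀ : G) * (h : G)) x := by
      rw [map_mul, Module.End.mul_apply]
    rw [this, ← Subgroup.coe_mul]
  -- π fixes K
  have hfixK : ∀ x ∈ K, π x = x := by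
    intro x hx
    have hfix' : ∀ h : H, ρ (h : G) x = x := by
      intro h
      have h2 := (Submodule.mem_iInf _).mp (hK ▸ hx) h
      rwa [LinearMap.mem_eqLocus, LinearMap.id_apply] at h2
    rw [hπ_apply]
    simp only [hfix']
    rw [Finset.sum_const, Finset.card_univ, ← Nat.cast_smul_eq_nsmul ℂ, smul_smul,
      inv_mul_cancel₀ hcardH, one_smul]
  have hππ : π * π = π := by
    ext x
    exact hfixK _ (hmemK x)
  -- eV acts as identity
  have he : Representation.asAlgebraHom ρ eV = 1 := by
    rw [heV, map_smul, map_sum]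
    simp only [map_smul, MonoidAlgebra.of_apply, Representation.asAlgebraHom_single_one]
    rw [sum_char_smul ρ hirr hV, smul_smul]
    have : (finrank ℂ V : ℂ) / (Fintype.card G : ℂ) *
        ((Fintype.card G : ℂ) / (finrank ℂ V : ℂ)) = 1 := by
      field_simp
    rw [this, one_smul]
  -- spanning vector of K
  have hKrank : finrank ℂ K = 1 := hfix
  obtain ⟨v₀, hv₀ne, hv₀span⟩ := finrank_eq_one_iff'.mp hKrank
  -- sandwiching by π gives scalars
  have hscalar : ∀ B : Module.End ℂ V, ∃ s : ℂ, π * B * π = s • π := by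
    intro B
    obtain ⟨s, hs⟩ := hv₀span ⟨π (B (v₀ : V)), hmemK _⟩
    have hsv : π (B (v₀ : V)) = s • (v₀ : V) := by
      have := congrArg (Subtype.val) hs
      simpa using this.symm
    refine ⟨s, ?_⟩
    ext x
    simp only [Module.End.mul_apply, LinearMap.smul_apply]
    obtain ⟨t, ht⟩ := hv₀span ⟨π x, hmemK x⟩
    have htv : π x = t • (v₀ : V) := by
      have := congrArg (Subtype.val) ht
      simpa using this.symm
    rw [htv, map_smul, map_smul, hsv, smul_comm]
  -- the factoring of right multiplication by eV
  have hfactor : ∀ b : MonoidAlgebra ℂ G, b * eV =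
      ((finrank ℂ V : ℂ) / (Fintype.card G : ℂ)) •
        ∑ y : G, (trace ℂ V (ρ y⁻¹ * Representation.asAlgebraHom ρ b)) •
          MonoidAlgebra.of ℂ G y := by
    intro b
    rw [heV]
    exact mul_eV_eq ρ b
  -- f * f
  have hff : (p * eV) * (p * eV) =
      ((finrank ℂ V : ℂ) / (Fintype.card G : ℂ)) •
        ∑ y : G, (trace ℂ V (ρ y⁻¹ * π)) • MonoidAlgebra.of ℂ G y := by
    have h1 : (p * eV) * (p * eV) = (p * eV * p) * eV := by
      rw [mul_assoc, mul_assoc, mul_assoc]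
    rw [h1, hfactor]
    have h2 : Representation.asAlgebraHom ρ (p * eV * p) = π := by
      rw [map_mul, map_mul, he, ← hπ, mul_one, hππ]
    rw [h2]
  -- every sandwich is a multiple of f * f
  have hkey : ∀ a : MonoidAlgebra ℂ G, ∃ s : ℂ,
      (p * eV) * a * (p * eV) = s • ((p * eV) * (p * eV)) := by
    intro a
    obtain ⟨s, hs⟩ := hscalar (Representation.asAlgebraHom ρ a)
    refine ⟨s, ?_⟩
    have h1 : (p * eV) * a * (p * eV) = ((p * eV) * a * p) * eV := by
      rw [← mul_assoc]
    have h2 : Representation.asAlgebraHom ρ ((p * eV) * a * p) = s • π := by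
      rw [map_mul, map_mul, map_mul, he, ← hπ, mul_one]
      exact hs
    rw [h1, hfactor, h2, hff, smul_comm]
    congr 1
    rw [Finset.smul_sum]
    refine Finset.sum_congr rfl fun y _ => ?_
    rw [mul_smul_comm, map_smul, smul_eq_mul, mul_smul]
  -- f * f is nonzero
  have hffne : (p * eV) * (p * eV) ≠ 0 := by
    intro h0
    have hφ : Representation.asAlgebraHom ρ ((p * eV) * (p * eV)) = π := by
      simp only [map_mul, he, ← hπ, mul_one]
      exact hππ
    rw [h0, map_zero] at hφ
    have hv0 : π (v₀ : V) = (v₀ : V) := hfixK _ v₀.2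
    rw [← hφ] at hv0
    simp only [LinearMap.zero_apply] at hv0
    have hz : v₀ = 0 := by
      apply Subtype.ext
      simpa using hv0.symm
    exact hv₀ne hz
  -- assemble
  have h1 : Submodule.span ℂ
      {x : MonoidAlgebra ℂ G | ∃ a : MonoidAlgebra ℂ G, x = (p * eV) * a * (p * eV)}
      ≤ Submodule.span ℂ {(p * eV) * (p * eV)} := by
    rw [Submodule.span_le]
    rintro x ⟨a, rfl⟩
    obtain ⟨s, hs⟩ := hkey a
    rw [hs]
    exact Submodule.smul_mem _ s (Submodule.subset_span rfl)
  have h2 : Submodule.span ℂ {(p * eV) * (p * eV)} ≤ Submodule.span ℂ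
      {x : MonoidAlgebra ℂ G | ∃ a : MonoidAlgebra ℂ G, x = (p * eV) * a * (p * eV)} := by
    rw [Submodule.span_le]
    rintro x hx
    rw [Set.mem_singleton_iff] at hx
    subst hx
    exact Submodule.subset_span ⟨1, by rw [mul_one]⟩
  rw [le_antisymm h1 h2]
  exact finrank_span_singleton hffne
end

section
/- Let G be a finite group and H ≤ G. There exists a common system of representatives {g_{ij} : 1 ≤ i ≤ d, 1 ≤ j ≤ n_i} for the left cosets and the right cosets of H in G, compatible with the double coset decomposition: G = ⊔_i H g_{i1} H and H g_{i1} H = ⊔_j g_{ij} H = ⊔_j H g_{ij}. -/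
open QuotientGroup

section Stmt13Aux

variable {G : Type} [Group G] [Fintype G] (H : Subgroup G)

/-- projection from left cosets to double cosets -/
noncomputable def pl : G ⧸ H → DoubleCoset.Quotient (H : Set G) (H : Set G) :=
  Quotient.map' id (fun a b h => by
    have hab : a⁻¹ * b ∈ H := (QuotientGroup.leftRel_apply).mp h
    have hb : b ∈ DoubleCoset.doubleCoset a (H : Set G) H :=
      DoubleCoset.mem_doubleCoset.mpr ⟨1, H.one_mem, a⁻¹ * b, hab, by group⟩
    exact (DoubleCoset.doubleCoset_eq_of_mem hb).symm)

noncomputable def pr : Quotient (QuotientGroup.rightRel H) → DoubleCoset.Quotient (H : Set G) (H : Set G) :=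
  Quotient.map' id (fun a b h => by
    have hab : b * a⁻¹ ∈ H := (QuotientGroup.rightRel_apply).mp h
    have hb : b ∈ DoubleCoset.doubleCoset a (H : Set G) H :=
      DoubleCoset.mem_doubleCoset.mpr ⟨b * a⁻¹, hab, 1, H.one_mem, by group⟩
    exact (DoubleCoset.doubleCoset_eq_of_mem hb).symm)

lemma pl_mk (x : G) : pl H (QuotientGroup.mk x) = DoubleCoset.mk H H x := rfl

lemma pr_mk (x : G) : pr H (Quotient.mk'' x) = DoubleCoset.mk H H x := rfl

end Stmt13Aux

section Stmt13Aux2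

variable {G : Type} [Group G] [Fintype G] (H : Subgroup G)

set_option maxHeartbeats 1000000 in
lemma card_fiber_eq (g : G) :
    Nat.card {L : G ⧸ H // pl H L = DoubleCoset.mk H H g}
      = Nat.card {R : Quotient (QuotientGroup.rightRel H) // pr H R = DoubleCoset.mk H H g} := by
  classical
  set Kl : Subgroup H := (H.comap (MulAut.conj g⁻¹).toMonoidHom).subgroupOf H with hKl
  set Kr : Subgroup H := (H.comap (MulAut.conj g).toMonoidHom).subgroupOf H with hKr
  have memKl : ∀ x : H, x ∈ Kl ↔ g⁻¹ * x * g ∈ H := by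
    intro x
    simp [hKl, Subgroup.mem_subgroupOf, Subgroup.mem_comap, MulAut.conj_apply]
  have memKr : ∀ x : H, x ∈ Kr ↔ g * x * g⁻¹ ∈ H := by
    intro x
    simp [hKr, Subgroup.mem_subgroupOf, Subgroup.mem_comap, MulAut.conj_apply]
  -- the equiv between Kl and Kr
  have eK : Kl ≃ Kr := by
    refine ⟨fun x => ⟨⟨g⁻¹ * x * g, (memKl x).mp x.2⟩, ?_⟩,
            fun y => ⟨⟨g * y * g⁻¹, (memKr y).mp y.2⟩, ?_⟩, ?_, ?_⟩
    · rw [memKr]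
      simpa [mul_assoc] using (x : H).2
    · rw [memKl]
      simpa [mul_assoc] using (y : H).2
    · intro x
      ext
      simp [mul_assoc]
    · intro y
      ext
      simp [mul_assoc]
  -- left fiber equiv
  have wdl : ∀ a b : H, (QuotientGroup.leftRel Kl).r a b → (QuotientGroup.leftRel H).r ((a : G) * g) ((b : G) * g) := by
    intro a b hab
    rw [QuotientGroup.leftRel_apply] at hab ⊢
    have : g⁻¹ * ((a⁻¹ * b : H) : G) * g ∈ H := (memKl _).mp hab
    push_cast at this
    convert this using 1
    group
  have Fl : H ⧸ Kl ≃ {L : G ⧸ H // pl H L = DoubleCoset.mk H H g} := by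
    refine Equiv.ofBijective
      (fun q => ⟨Quotient.map' (fun h : H => (h : G) * g) wdl q, ?_⟩) ⟨?_, ?_⟩
    · induction q using Quotient.inductionOn' with
      | h a =>
        show pl H (QuotientGroup.mk ((a : G) * g)) = DoubleCoset.mk H H g
        rw [pl_mk, DoubleCoset.eq]
        exact ⟨a⁻¹, H.inv_mem a.2, 1, H.one_mem, by group⟩
    · intro q q' hqq
      induction q using Quotient.inductionOn' with
      | h a =>
        induction q' using Quotient.inductionOn' with
        | h b =>
          simp only [Subtype.mk.injEq] at hqq
          have h2 := Quotient.exact' hqq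
          rw [QuotientGroup.leftRel_apply] at h2
          refine Quotient.sound' ?_
          rw [QuotientGroup.leftRel_apply, memKl]
          push_cast
          convert h2 using 1
          group
    · rintro ⟨L, hL⟩
      induction L using Quotient.inductionOn' with
      | h x =>
        have hL' : DoubleCoset.mk H H x = DoubleCoset.mk H H g := hL
        obtain ⟨h, hh, k, hk, hxk⟩ := (DoubleCoset.eq H H x g).mp hL'
        refine ⟨Quotient.mk'' ⟨h⁻¹, H.inv_mem hh⟩, ?_⟩
        refine Subtype.ext ?_
        show QuotientGroup.mk (h⁻¹ * g) = Quotient.mk'' x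
        refine Quotient.sound' ?_
        rw [QuotientGroup.leftRel_apply]
        have : (h⁻¹ * g)⁻¹ * x = k⁻¹ := by rw [hxk]; group
        rw [this]
        exact H.inv_mem hk
  -- right fiber equiv
  have wdr : ∀ a b : H, (QuotientGroup.leftRel Kr).r a b → (QuotientGroup.rightRel H).r (g * (a : G)⁻¹) (g * (b : G)⁻¹) := by
    intro a b hab
    rw [QuotientGroup.leftRel_apply] at hab
    rw [QuotientGroup.rightRel_apply]
    have : g * ((a⁻¹ * b : H) : G) * g⁻¹ ∈ H := (memKr _).mp hab
    push_cast at this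
    have h2 := H.inv_mem this
    convert h2 using 1
    group
  have Fr : H ⧸ Kr ≃ {R : Quotient (QuotientGroup.rightRel H) // pr H R = DoubleCoset.mk H H g} := by
    refine Equiv.ofBijective
      (fun q => ⟨Quotient.map' (fun h : H => g * (h : G)⁻¹) wdr q, ?_⟩) ⟨?_, ?_⟩
    · induction q using Quotient.inductionOn' with
      | h a =>
        show pr H (Quotient.mk'' (g * (a : G)⁻¹)) = DoubleCoset.mk H H g
        rw [pr_mk, DoubleCoset.eq]
        exact ⟨1, H.one_mem, a, a.2, by group⟩
    · intro q q' hqq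
      induction q using Quotient.inductionOn' with
      | h a =>
        induction q' using Quotient.inductionOn' with
        | h b =>
          simp only [Subtype.mk.injEq] at hqq
          have h2 := Quotient.exact' hqq
          rw [QuotientGroup.rightRel_apply] at h2
          refine Quotient.sound' ?_
          rw [QuotientGroup.leftRel_apply, memKr]
          have h3 := H.inv_mem h2
          push_cast
          convert h3 using 1
          group
    · rintro ⟨R, hR⟩
      induction R using Quotient.inductionOn' with
      | h x =>
        have hR' : DoubleCoset.mk H H x = DoubleCoset.mk H H g := hR
        obtain ⟨h, hh, k, hk, hxk⟩ := (DoubleCoset.eq H H x g).mp hR'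
        refine ⟨Quotient.mk'' ⟨k, hk⟩, ?_⟩
        refine Subtype.ext ?_
        show Quotient.mk'' (g * k⁻¹) = Quotient.mk'' x
        refine Quotient.sound' ?_
        rw [QuotientGroup.rightRel_apply]
        have : x * (g * k⁻¹)⁻¹ = h⁻¹ := by rw [hxk]; group
        rw [this]
        exact H.inv_mem hh
  -- conclude by cardinality count
  have h1 := Subgroup.card_eq_card_quotient_mul_card_subgroup Kl
  have h2 := Subgroup.card_eq_card_quotient_mul_card_subgroup Kr
  have hKcard : Nat.card Kl = Nat.card Kr := Nat.card_congr eK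
  have hpos : 0 < Nat.card Kl := Nat.card_pos
  have hq : Nat.card (H ⧸ Kl) = Nat.card (H ⧸ Kr) := by
    apply Nat.eq_of_mul_eq_mul_right hpos
    rw [← h1]
    rw [hKcard, ← h2]
  rw [← Nat.card_congr Fl, ← Nat.card_congr Fr]
  exact hq

end Stmt13Aux2

section Stmt13Aux3

variable {G : Type} [Group G] [Fintype G]

noncomputable def Ecorr (H : Subgroup G) : (G ⧸ H) ≃ Quotient (QuotientGroup.rightRel H) :=
  Equiv.ofFiberEquiv (f := pl H) (g := pr H) (fun q => by
    haveI : Fintype {L // pl H L = q} := Fintype.ofFinite _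
    haveI : Fintype {R // pr H R = q} := Fintype.ofFinite _
    refine Fintype.equivOfCardEq ?_
    rw [← Nat.card_eq_fintype_card, ← Nat.card_eq_fintype_card]
    induction q using Quotient.inductionOn' with
    | h g => exact card_fiber_eq H g)

lemma Ecorr_doset (H : Subgroup G) (L : G ⧸ H) : pr H (Ecorr H L) = pl H L :=
  Equiv.ofFiberEquiv_map _ _

lemma exists_common_rep (H : Subgroup G) (L : G ⧸ H) :
    ∃ x : G, QuotientGroup.mk x = L ∧
      (Quotient.mk'' x : Quotient (QuotientGroup.rightRel H)) = Ecorr H L := by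
  obtain ⟨a, rfl⟩ : ∃ a : G, QuotientGroup.mk a = L := ⟨L.out, QuotientGroup.out_eq' L⟩
  obtain ⟨b, hb⟩ : ∃ b : G, (Quotient.mk'' b : Quotient (QuotientGroup.rightRel H)) = Ecorr H (QuotientGroup.mk a) :=
    ⟨(Ecorr H (QuotientGroup.mk a)).out, Quotient.out_eq' _⟩
  have hd : DoubleCoset.mk H H b = DoubleCoset.mk H H a := by
    have := Ecorr_doset H (QuotientGroup.mk a)
    rwa [← hb, pr_mk, pl_mk] at this
  obtain ⟨h, hh, k, hk, hab⟩ := (DoubleCoset.eq H H b a).mp hd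
  refine ⟨a * k⁻¹, ?_, ?_⟩
  · refine (QuotientGroup.eq).mpr ?_
    have : (a * k⁻¹)⁻¹ * a = k := by group
    rw [this]; exact hk
  · rw [← hb]
    refine Quotient.sound' ?_
    rw [QuotientGroup.rightRel_apply]
    have : b * (a * k⁻¹)⁻¹ = h⁻¹ := by rw [hab]; group
    rw [this]; exact H.inv_mem hh

end Stmt13Aux3

/-- For a subgroup `H` of a finite group `G` there is a common system of representatives `S`
for the left cosets and the right cosets of `H` in `G`, compatible with the double coset
decomposition: each double coset is the union of the left cosets (resp. right cosets) of its
representatives in `S`. -/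
theorem stmt_13 (G : Type) [Group G] [Fintype G] (H : Subgroup G) :
    ∃ S : Finset G,
      (∀ x : G, ∃! s : G, s ∈ S ∧ s⁻¹ * x ∈ H) ∧
      (∀ x : G, ∃! s : G, s ∈ S ∧ x * s⁻¹ ∈ H) ∧
      (∀ s ∈ S,
        DoubleCoset.doubleCoset s (H : Set G) (H : Set G) =
          (⋃ t ∈ {t : G | t ∈ S ∧ t ∈ DoubleCoset.doubleCoset s (H : Set G) (H : Set G)},
            (fun h => t * h) '' (H : Set G)) ∧
        DoubleCoset.doubleCoset s (H : Set G) (H : Set G) =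
          (⋃ t ∈ {t : G | t ∈ S ∧ t ∈ DoubleCoset.doubleCoset s (H : Set G) (H : Set G)},
            (fun h => h * t) '' (H : Set G))) := by
  classical
  set c : (G ⧸ H) → G := fun L => (exists_common_rep H L).choose with hc
  have hc1 : ∀ L, QuotientGroup.mk (c L) = L := fun L => (exists_common_rep H L).choose_spec.1
  have hc2 : ∀ L, (Quotient.mk'' (c L) : Quotient (QuotientGroup.rightRel H)) = Ecorr H L :=
    fun L => (exists_common_rep H L).choose_spec.2
  set S : Finset G := Finset.image c Finset.univ with hS
  have hmem : ∀ L, c L ∈ S := fun L => Finset.mem_image_of_mem c (Finset.mem_univ L)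
  have h1 : ∀ x : G, ∃! s : G, s ∈ S ∧ s⁻¹ * x ∈ H := by
    intro x
    refine ⟨c (QuotientGroup.mk x), ⟨hmem _, ?_⟩, ?_⟩
    · exact (QuotientGroup.eq).mp (hc1 (QuotientGroup.mk x))
    · rintro s ⟨hsS, hsx⟩
      obtain ⟨L, -, rfl⟩ := Finset.mem_image.mp hsS
      have : QuotientGroup.mk (c L) = QuotientGroup.mk x := (QuotientGroup.eq).mpr hsx
      rw [hc1 L] at this
      rw [this]
  have h2 : ∀ x : G, ∃! s : G, s ∈ S ∧ x * s⁻¹ ∈ H := by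
    intro x
    refine ⟨c ((Ecorr H).symm (Quotient.mk'' x)), ⟨hmem _, ?_⟩, ?_⟩
    · have : (Quotient.mk'' (c ((Ecorr H).symm (Quotient.mk'' x)))
          : Quotient (QuotientGroup.rightRel H)) = Quotient.mk'' x := by
        rw [hc2]; exact (Ecorr H).apply_symm_apply _
      have h3 := Quotient.exact' this
      rwa [QuotientGroup.rightRel_apply] at h3
    · rintro s ⟨hsS, hsx⟩
      obtain ⟨L, -, rfl⟩ := Finset.mem_image.mp hsS
      have : (Quotient.mk'' (c L) : Quotient (QuotientGroup.rightRel H)) = Quotient.mk'' x :=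
        Quotient.sound' ((QuotientGroup.rightRel_apply).mpr hsx)
      rw [hc2 L] at this
      have hL : L = (Ecorr H).symm (Quotient.mk'' x) := by
        rw [← this, Equiv.symm_apply_apply]
      rw [hL]
  refine ⟨S, h1, h2, ?_⟩
  intro s hsS
  constructor
  · apply Set.Subset.antisymm
    · intro x hx
      obtain ⟨t, ⟨htS, htx⟩, -⟩ := h1 x
      have htd : t ∈ DoubleCoset.doubleCoset s (H : Set G) (H : Set G) := by
        rw [← DoubleCoset.doubleCoset_eq_of_mem hx]
        exact DoubleCoset.mem_doubleCoset.mpr ⟨1, H.one_mem, (t⁻¹ * x)⁻¹, H.inv_mem htx, by group⟩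
      refine Set.mem_iUnion₂.mpr ⟨t, ⟨htS, htd⟩, ⟨t⁻¹ * x, htx, by group⟩⟩
    · intro x hx
      obtain ⟨t, ⟨htS, htd⟩, h, hh, rfl⟩ := Set.mem_iUnion₂.mp hx
      rw [← DoubleCoset.doubleCoset_eq_of_mem htd]
      exact DoubleCoset.mem_doubleCoset.mpr ⟨1, H.one_mem, h, hh, by group⟩
  · apply Set.Subset.antisymm
    · intro x hx
      obtain ⟨t, ⟨htS, htx⟩, -⟩ := h2 x
      have htd : t ∈ DoubleCoset.doubleCoset s (H : Set G) (H : Set G) := by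
        rw [← DoubleCoset.doubleCoset_eq_of_mem hx]
        exact DoubleCoset.mem_doubleCoset.mpr ⟨(x * t⁻¹)⁻¹, H.inv_mem htx, 1, H.one_mem, by group⟩
      refine Set.mem_iUnion₂.mpr ⟨t, ⟨htS, htd⟩, ⟨x * t⁻¹, htx, by group⟩⟩
    · intro x hx
      obtain ⟨t, ⟨htS, htd⟩, h, hh, rfl⟩ := Set.mem_iUnion₂.mp hx
      rw [← DoubleCoset.doubleCoset_eq_of_mem htd]
      exact DoubleCoset.mem_doubleCoset.mpr ⟨h, hh, 1, H.one_mem, by group⟩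
end

section
/- Let G be a finite group, H ≤ G, and W a rational irreducible representation of G with associated complex irreducible representation V and character field K_V. Define F_{H,W} = ∑_i a_i F_i in the Hecke ring, where a_i = ∑_{h∈H} Tr_{K_V/Q}(χ_V(h g_{i1}⁻¹)) and F_i = (1/|H|)∑_{g∈Hg_{i1}H} g. Then f_{H,W} := p_H e_W satisfies f_{H,W} = (dim V / |G|) · F_{H,W}, and both lie in the Hecke algebra Q[H\G/H]. -/
/-- With `a_t = ∑_{h∈H} Tr_{K_V/ℚ}(χ_V(h t⁻¹))` and `F_t = (1/|H|) ∑_{x∈HtH} x`, the element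
`f_{H,W} = p_H e_W` satisfies `f_{H,W} = (dim V/|G|) · F_{H,W}` where
`F_{H,W} = ∑_t a_t F_t` over double-coset representatives, and both lie in the Hecke algebra
`ℚ[H\G/H] = p_H ℚ[G] p_H`. -/
theorem stmt_15 (G : Type) [Group G] [Fintype G] (H : Subgroup G) [DecidablePred (· ∈ H)]
    (V : Type) [AddCommGroup V] [Module ℂ V] [FiniteDimensional ℂ V]
    (ρ : Representation ℂ G V)
    (hirr : ∀ U : Submodule ℂ V, (∀ g : G, ∀ x ∈ U, ρ g x ∈ U) → U = ⊥ ∨ U = ⊤)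
    (hV : Nontrivial V)
    (χ : G → ℂ) (hχ : ∀ g, χ g = LinearMap.trace ℂ V (ρ g))
    (K : IntermediateField ℚ ℂ)
    (hK : K = IntermediateField.adjoin ℚ (Set.range χ))
    (hmem : ∀ g, χ g ∈ K)
    (p : MonoidAlgebra ℚ G)
    (hp : p = (Fintype.card H : ℚ)⁻¹ • ∑ h : H, MonoidAlgebra.of ℚ G (h : G))
    (eW : MonoidAlgebra ℚ G)
    (heW : eW = ((Module.finrank ℂ V : ℚ) / (Fintype.card G : ℚ)) •
      ∑ g : G, (Algebra.trace ℚ K ⟨χ g⁻¹, hmem g⁻¹⟩) • MonoidAlgebra.of ℚ G g)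
    (a : G → ℚ)
    (ha : ∀ g : G, a g = ∑ h : H, Algebra.trace ℚ K ⟨χ ((h : G) * g⁻¹), hmem _⟩)
    (F : G → MonoidAlgebra ℚ G)
    (hF : ∀ g : G, F g = (Fintype.card H : ℚ)⁻¹ •
      ∑ x ∈ (Set.toFinite (DoubleCoset.doubleCoset g (H : Set G) (H : Set G))).toFinset,
        MonoidAlgebra.of ℚ G x)
    (T : Finset G)
    (hT : ∀ x : G, ∃! t : G, t ∈ T ∧ x ∈ DoubleCoset.doubleCoset t (H : Set G) (H : Set G)) :
    p * eW = ((Module.finrank ℂ V : ℚ) / (Fintype.card G : ℚ)) • ∑ t ∈ T, a t • F t ∧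
    p * (p * eW) * p = p * eW ∧
    p * (∑ t ∈ T, a t • F t) * p = ∑ t ∈ T, a t • F t := by
  classical
  set c : ℚ := (Module.finrank ℂ V : ℚ) / (Fintype.card G : ℚ) with hc
  -- χ is a class function
  have hcls : ∀ x y : G, χ (x * y) = χ (y * x) := by
    intro x y
    rw [hχ, hχ, ρ.map_mul, ρ.map_mul, LinearMap.trace_mul_comm]
  -- a is constant on double cosets
  have haconst : ∀ t : G, ∀ x ∈ DoubleCoset.doubleCoset t (H : Set G) (H : Set G), a x = a t := by
    intro t x hx
    obtain ⟨h₁, hh₁, h₂, hh₂, rfl⟩ := DoubleCoset.mem_doubleCoset.1 hx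
    rw [ha, ha]
    refine Fintype.sum_equiv
      ((Equiv.mulLeft (⟨h₁, hh₁⟩ : H)⁻¹).trans (Equiv.mulRight (⟨h₂, hh₂⟩ : H)⁻¹))
      _ _ (fun h => ?_)
    congr 1
    ext
    show χ ((h : G) * (h₁ * t * h₂)⁻¹) = χ (((h₁⁻¹ * (h : G)) * h₂⁻¹) * t⁻¹)
    have e1 : (h : G) * (h₁ * t * h₂)⁻¹ = ((h : G) * h₂⁻¹ * t⁻¹) * h₁⁻¹ := by group
    rw [e1, hcls]
    congr 1
    group
  -- partition of G into double cosets indexed by T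
  have hpart : ∀ (f : G → MonoidAlgebra ℚ G),
      ∑ t ∈ T, ∑ x ∈ (Set.toFinite (DoubleCoset.doubleCoset t (H : Set G) (H : Set G))).toFinset, f x
        = ∑ x : G, f x := by
    intro f
    choose τ hτ huniq using hT
    rw [← Finset.sum_fiberwise_of_maps_to (g := τ) (fun x _ => (hτ x).1) f]
    refine Finset.sum_congr rfl fun t ht => Finset.sum_congr ?_ fun _ _ => rfl
    ext x
    simp only [Finset.mem_filter, Finset.mem_univ, true_and, Set.Finite.mem_toFinset]
    constructor
    · intro hx; exact (huniq x t ⟨ht, hx⟩).symm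
    · rintro rfl; exact (hτ x).2
  -- p is idempotent
  have hcardH : (Fintype.card H : ℚ) ≠ 0 := by exact_mod_cast Fintype.card_ne_zero
  have hidem : p * p = p := by
    rw [hp, smul_mul_assoc, mul_smul_comm, smul_smul, Finset.sum_mul]
    have inner : ∀ h : H, (MonoidAlgebra.of ℚ G (h : G)) * (∑ k : H, MonoidAlgebra.of ℚ G (k : G))
        = ∑ k : H, MonoidAlgebra.of ℚ G (k : G) := by
      intro h
      rw [Finset.mul_sum]
      refine Fintype.sum_equiv (Equiv.mulLeft h) _ _ fun k => ?_
      rw [← map_mul]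
      rfl
    rw [Finset.sum_congr rfl fun h _ => inner h, Finset.sum_const, Finset.card_univ]
    rw [← Nat.cast_smul_eq_nsmul ℚ, smul_smul]
    congr 1
    field_simp
  -- eW is central
  have hcent : ∀ g : G, MonoidAlgebra.of ℚ G g * eW = eW * MonoidAlgebra.of ℚ G g := by
    intro g
    rw [heW, mul_smul_comm, smul_mul_assoc]
    congr 1
    rw [Finset.mul_sum, Finset.sum_mul]
    refine Fintype.sum_equiv ((Equiv.mulRight g⁻¹).trans (Equiv.mulLeft g)) _ _ fun x => ?_
    rw [mul_smul_comm, smul_mul_assoc, ← map_mul, ← map_mul]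
    simp only [Equiv.trans_apply, Equiv.coe_mulRight, Equiv.coe_mulLeft]
    have e3 : (⟨χ ((g * (x * g⁻¹))⁻¹), hmem _⟩ : K) = ⟨χ x⁻¹, hmem x⁻¹⟩ := by
      ext
      show χ _ = χ _
      have e4 : (g * (x * g⁻¹))⁻¹ = (g * x⁻¹) * g⁻¹ := by group
      rw [e4, hcls]
      congr 1
      group
    rw [e3]
    congr 1
    congr 1
    group
  have hpe : p * eW = eW * p := by
    rw [hp, smul_mul_assoc, mul_smul_comm]
    congr 1
    rw [Finset.sum_mul, Finset.mul_sum]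
    exact Finset.sum_congr rfl fun h _ => hcent h
  -- the first identity
  have hRHS : ∑ t ∈ T, a t • F t
      = (Fintype.card H : ℚ)⁻¹ • ∑ x : G, a x • MonoidAlgebra.of ℚ G x := by
    rw [← hpart (fun x => a x • MonoidAlgebra.of ℚ G x), Finset.smul_sum]
    refine Finset.sum_congr rfl fun t ht => ?_
    rw [hF, smul_comm (a t), Finset.smul_sum]
    congr 1
    refine Finset.sum_congr rfl fun x hx => ?_
    rw [haconst t x (Set.Finite.mem_toFinset _ |>.1 hx)]
  have hLHS : p * eW
      = c • ((Fintype.card H : ℚ)⁻¹ • ∑ x : G, a x • MonoidAlgebra.of ℚ G x) := by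
    rw [hp, heW, smul_mul_assoc, mul_smul_comm, smul_comm]
    congr 1
    congr 1
    rw [Finset.sum_mul]
    have inner : ∀ h : H, (MonoidAlgebra.of ℚ G (h : G)) *
        (∑ g : G, (Algebra.trace ℚ K ⟨χ g⁻¹, hmem g⁻¹⟩) • MonoidAlgebra.of ℚ G g)
        = ∑ x : G, (Algebra.trace ℚ K ⟨χ (x⁻¹ * (h : G)), hmem _⟩) • MonoidAlgebra.of ℚ G x := by
      intro h
      rw [Finset.mul_sum]
      refine Fintype.sum_equiv (Equiv.mulLeft (h : G)) _ _ fun g => ?_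
      rw [mul_smul_comm, ← map_mul]
      show _ = (Algebra.trace ℚ K ⟨χ (((h : G) * g)⁻¹ * (h : G)), hmem _⟩) •
        MonoidAlgebra.of ℚ G ((h : G) * g)
      have e5 : (⟨χ (((h : G) * g)⁻¹ * (h : G)), hmem _⟩ : K) = ⟨χ g⁻¹, hmem g⁻¹⟩ := by
        ext
        show χ _ = χ _
        congr 1
        group
      rw [e5]
    rw [Finset.sum_congr rfl fun h _ => inner h, Finset.sum_comm]
    refine Finset.sum_congr rfl fun x _ => ?_
    rw [← Finset.sum_smul]
    congr 1
    rw [ha]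
    refine Finset.sum_congr rfl fun h _ => ?_
    congr 1
    ext
    show χ _ = χ _
    rw [hcls]
  have goal1 : p * eW = c • ∑ t ∈ T, a t • F t := by rw [hRHS]; exact hLHS
  have claim2 : p * (p * eW) * p = p * eW := by
    rw [← mul_assoc p p eW, hidem, hpe, mul_assoc, hidem, ← hpe]
  have hcne : c ≠ 0 := by
    apply div_ne_zero
    · exact_mod_cast Module.finrank_pos.ne'
    · exact_mod_cast Fintype.card_ne_zero
  have hXeq : ∑ t ∈ T, a t • F t = c⁻¹ • (p * eW) := by
    rw [goal1, smul_smul, inv_mul_cancel₀ hcne, one_smul]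
  have claim3 : p * (∑ t ∈ T, a t • F t) * p = ∑ t ∈ T, a t • F t := by
    rw [hXeq, mul_smul_comm, smul_mul_assoc, claim2]
  exact ⟨goal1, claim2, claim3⟩
end

section
/- Let G be a finite group, H ≤ G, V a complex irreducible representation with dim V^H = 1 and Schur index 1 over K = K_V, and W the rational form of ⊕_{φ∈Gal(K/Q)} V^φ as above. Define S(w₁,w₂) = Tr_{K/Q}(v₁,v₂) for wᵢ = (vᵢ, vᵢ^{φ₂},…), where (·,·) is a G-invariant K-valued Hermitian product on V_K with (v,v) ∈ Q_{>0} for a fixed 0 ≠ v ∈ V_K^H. Then S is a G-invariant positive definite symmetric Q-bilinear form on W, and for w = (v, v^{φ₂}, …) and any g ∈ G: S(w, g·w) = ((v,v)/|H|)·∑_{h∈H} Tr_{K/Q}(χ_V(h g⁻¹)). -/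
set_option synthInstance.maxHeartbeats 1000000
set_option maxHeartbeats 2000000

open Module Matrix

lemma trace_aut' {F L : Type*} [Field F] [Field L] [Algebra F L] [FiniteDimensional F L]
    [IsGalois F L] (τ : L ≃ₐ[F] L) (x : L) :
    Algebra.trace F L (τ x) = Algebra.trace F L x := by
  apply (algebraMap F L).injective
  rw [trace_eq_sum_automorphisms, trace_eq_sum_automorphisms]
  exact Equiv.sum_comp (Equiv.mulRight τ) (fun φ => φ x)

lemma pi_eq_sum_single' {K : Type*} [Field K] {n : ℕ} (x : Fin n → K) :
    x = ∑ i, x i • (Pi.single i 1 : Fin n → K) := by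
  conv_lhs => rw [← Finset.univ_sum_single x]
  refine Finset.sum_congr rfl fun i _ => ?_
  rw [← Pi.single_smul, smul_eq_mul, mul_one]

lemma trace_rankone' {K : Type*} [Field K] {n : ℕ} (f : (Fin n → K) →ₗ[K] K) (x : Fin n → K) :
    LinearMap.trace K (Fin n → K) (LinearMap.smulRight f x) = f x := by
  rw [LinearMap.trace_eq_matrix_trace K (Pi.basisFun K (Fin n))]
  rw [Matrix.trace]
  have h1 : ∀ i, Matrix.diag (LinearMap.toMatrix (Pi.basisFun K (Fin n)) (Pi.basisFun K (Fin n))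
      (LinearMap.smulRight f x)) i = f (Pi.single i 1) * x i := by
    intro i
    simp [Matrix.diag, LinearMap.toMatrix_apply, mul_comm]
  rw [Finset.sum_congr rfl fun i _ => h1 i]
  conv_rhs => rw [pi_eq_sum_single' x]
  rw [map_sum]
  exact Finset.sum_congr rfl fun i _ => by rw [_root_.map_smul, smul_eq_mul, mul_comm]

lemma keypos (G : Type) [Group G] [Fintype G]
    (K : IntermediateField ℚ ℂ) [FiniteDimensional ℚ ↥K] [IsGalois ℚ ↥K]
    (habelian : ∀ φ ψ : ↥K ≃ₐ[ℚ] ↥K, φ * ψ = ψ * φ)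
    (n : ℕ) (ρ : Representation ↥K G (Fin n → ↥K))
    (hSchur : ∀ f : (Fin n → ↥K) →ₗ[↥K] (Fin n → ↥K),
      (∀ g : G, f ∘ₗ (ρ g) = (ρ g) ∘ₗ f) → ∃ c : ↥K, f = c • LinearMap.id)
    (σ : ↥K ≃ₐ[ℚ] ↥K) (hσ : ∀ x : ↥K, ((σ x : ↥K) : ℂ) = starRingEnd ℂ (x : ℂ))
    (B : (Fin n → ↥K) → (Fin n → ↥K) → ↥K)
    (hBadd : ∀ x y z, B x (y + z) = B x y + B x z)
    (hBsmul : ∀ (c : ↥K) (x y), B x (c • y) = c * B x y)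
    (hBherm : ∀ x y, B y x = σ (B x y))
    (hBinv : ∀ (g : G) (x y), B (ρ g x) (ρ g y) = B x y)
    (v : Fin n → ↥K) (hv0 : v ≠ 0)
    (q : ℚ) (hq : 0 < q) (hBvv : B v v = algebraMap ℚ ↥K q)
    (u : Fin n → ↥K) (hu0 : u ≠ 0) :
    0 < Algebra.trace ℚ ↥K (B u u) := by
  classical
  -- B as a linear map in the second variable
  set BL : (Fin n → ↥K) → (Fin n → ↥K) →ₗ[↥K] ↥K := fun x =>
    { toFun := B x, map_add' := hBadd x, map_smul' := fun c y => hBsmul c x y } with hBL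
  have hBLapp : ∀ x y, BL x y = B x y := fun x y => rfl
  -- σ as a ring hom
  set sr : ↥K →+* ↥K := (σ : ↥K →+* ↥K) with hsrdef
  have hsr : ∀ x : ↥K, sr x = σ x := fun x => rfl
  -- matrices of the representation
  set A : G → Matrix (Fin n) (Fin n) ↥K := fun g => LinearMap.toMatrix' (ρ g) with hA
  have hAapp : ∀ (g : G) (x : Fin n → ↥K), ρ g x = (A g).mulVec x := by
    intro g x
    rw [hA, ← Matrix.toLin'_apply, Matrix.toLin'_toMatrix']
  have hAmul : ∀ g g' : G, A (g * g') = A g * A g' := by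
    intro g g'
    simp only [hA]
    rw [map_mul ρ, Module.End.mul_eq_comp, LinearMap.toMatrix'_comp]
  have hA1 : A 1 = 1 := by
    simp only [hA]
    rw [_root_.map_one ρ, Module.End.one_eq_id, LinearMap.toMatrix'_id]
  -- the matrix of B
  set M : Matrix (Fin n) (Fin n) ↥K :=
    Matrix.of (fun i j => B (Pi.single i 1) (Pi.single j 1)) with hM
  have hMapp : ∀ i j, M i j = B (Pi.single i 1) (Pi.single j 1) := fun i j => rfl
  have e1 : ∀ (x : Fin n → ↥K) j, B x (Pi.single j 1) = ∑ i, σ (x i) * M i j := by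
    intro x j
    have h1 : B (Pi.single j 1) x = ∑ i, x i * B (Pi.single j 1) (Pi.single i 1) := by
      conv_lhs => rw [pi_eq_sum_single' x]
      rw [← hBLapp, map_sum]
      exact Finset.sum_congr rfl fun i _ => by rw [_root_.map_smul, smul_eq_mul, hBLapp]
    rw [hBherm, h1, map_sum]
    refine Finset.sum_congr rfl fun i _ => ?_
    rw [_root_.map_mul, ← (hBherm (Pi.single j 1) (Pi.single i 1)), hMapp]
  have Bexp : ∀ x y, B x y = ∑ j, ∑ i, σ (x i) * M i j * y j := by
    intro x y
    conv_lhs => rw [pi_eq_sum_single' y]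
    rw [← hBLapp, map_sum]
    refine Finset.sum_congr rfl fun j _ => ?_
    rw [_root_.map_smul, smul_eq_mul, hBLapp, e1, mul_comm (y j) _, Finset.sum_mul]
  have Minv : ∀ g : G, ((A g).map ⇑sr)ᵀ * M * A g = M := by
    intro g
    refine Matrix.ext fun i j => ?_
    have h1 := hBinv g (Pi.single i 1) (Pi.single j 1)
    rw [hAapp, hAapp, Bexp] at h1
    calc (((A g).map ⇑sr)ᵀ * M * A g) i j
        = ∑ l, ∑ k, σ (A g k i) * M k l * A g l j := by
          simp only [Matrix.mul_apply, Matrix.transpose_apply, Matrix.map_apply,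
            Finset.sum_mul, hsr]
      _ = M i j := by
          rw [hMapp i j, ← h1]
          simp only [Matrix.mulVec_single, mul_one, MulOpposite.op_one, one_smul, Matrix.col_apply]
  set M₀ : Matrix (Fin n) (Fin n) ↥K := ∑ g : G, ((A g).map ⇑sr)ᵀ * A g with hM₀
  have M₀inv : ∀ g : G, ((A g).map ⇑sr)ᵀ * M₀ * A g = M₀ := by
    intro g
    have hterm : ∀ g' : G, ((A g).map ⇑sr)ᵀ * (((A g').map ⇑sr)ᵀ * A g') * A g
        = ((A (g' * g)).map ⇑sr)ᵀ * A (g' * g) := by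
      intro g'
      have e2 : ((A g).map ⇑sr)ᵀ * ((A g').map ⇑sr)ᵀ = ((A (g' * g)).map ⇑sr)ᵀ := by
        rw [← Matrix.transpose_mul, hAmul, Matrix.map_mul]
      calc ((A g).map ⇑sr)ᵀ * (((A g').map ⇑sr)ᵀ * A g') * A g
          = (((A g).map ⇑sr)ᵀ * ((A g').map ⇑sr)ᵀ) * (A g' * A g) := by
            rw [mul_assoc, mul_assoc, mul_assoc]
        _ = ((A (g' * g)).map ⇑sr)ᵀ * A (g' * g) := by rw [e2, hAmul]
    rw [hM₀, Finset.mul_sum, Finset.sum_mul]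
    rw [Finset.sum_congr rfl fun g' _ => hterm g']
    exact Fintype.sum_equiv (Equiv.mulRight g) _ _ (fun g' => rfl)
  have hAu1 : ∀ g : G, A g * A g⁻¹ = 1 := by
    intro g; rw [← hAmul, mul_inv_cancel, hA1]
  have hAu2 : ∀ g : G, A g⁻¹ * A g = 1 := by
    intro g; rw [← hAmul, inv_mul_cancel, hA1]
  -- embeddings of K into ℂ
  set emb : (↥K ≃ₐ[ℚ] ↥K) → (↥K →+* ℂ) :=
    fun φ => (algebraMap ↥K ℂ).comp (φ : ↥K →+* ↥K) with hemb
  have hembσ : ∀ (φ : ↥K ≃ₐ[ℚ] ↥K) (x : ↥K), emb φ (σ x) = starRingEnd ℂ (emb φ x) := by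
    intro φ x
    have h1 : φ (σ x) = σ (φ x) := by
      rw [← AlgEquiv.mul_apply, habelian φ σ, AlgEquiv.mul_apply]
    show algebraMap ↥K ℂ (φ (σ x)) = starRingEnd ℂ (algebraMap ↥K ℂ (φ x))
    rw [h1]
    exact hσ (φ x)
  have hmapvec : ∀ (φ : ↥K ≃ₐ[ℚ] ↥K) (N : Matrix (Fin n) (Fin n) ↥K) (x : Fin n → ↥K),
      (fun i => emb φ ((N.mulVec x) i)) = (N.map (emb φ)).mulVec (fun j => emb φ (x j)) := by
    intro φ N x
    funext i
    simp [Matrix.mulVec, dotProduct, map_sum, _root_.map_mul]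
  have hQ1 : ∀ (φ : ↥K ≃ₐ[ℚ] ↥K) (x : Fin n → ↥K),
      emb φ (B x x)
      = star (fun i => emb φ (x i)) ⬝ᵥ ((M.map (emb φ)).mulVec (fun i => emb φ (x i))) := by
    intro φ x
    rw [Bexp]
    simp only [map_sum, _root_.map_mul, hembσ]
    rw [Finset.sum_comm]
    simp only [dotProduct, Matrix.mulVec, Matrix.map_apply, Finset.mul_sum,
      Pi.star_apply, starRingEnd_apply, mul_assoc]
  have hM₀map : ∀ φ : ↥K ≃ₐ[ℚ] ↥K,
      M₀.map (emb φ) = ∑ g : G, ((A g).map (emb φ))ᴴ * ((A g).map (emb φ)) := by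
    intro φ
    refine Matrix.ext fun i j => ?_
    simp only [hM₀, Matrix.map_apply, Matrix.sum_apply, map_sum, Matrix.mul_apply,
      Matrix.transpose_apply, Matrix.conjTranspose_apply, _root_.map_mul, hsr, hembσ,
      starRingEnd_apply]
  have hsplit : ∀ (W : G → Matrix (Fin n) (Fin n) ℂ) (z : Fin n → ℂ),
      star z ⬝ᵥ (∑ g : G, W g).mulVec z = ∑ g : G, star z ⬝ᵥ (W g).mulVec z := by
    intro W z
    exact map_sum (AddMonoidHom.mk' (fun N : Matrix (Fin n) (Fin n) ℂ => star z ⬝ᵥ N.mulVec z)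
      (fun N₁ N₂ => by simp [Matrix.add_mulVec, dotProduct_add])) W Finset.univ
  have hQF0 : ∀ (φ : ↥K ≃ₐ[ℚ] ↥K) (z : Fin n → ℂ),
      star z ⬝ᵥ ((M₀.map (emb φ)).mulVec z)
      = ((∑ g : G, ∑ k, Complex.normSq (((A g).map (emb φ)).mulVec z k) : ℝ) : ℂ) := by
    intro φ z
    rw [hM₀map, hsplit]
    push_cast
    refine Finset.sum_congr rfl fun g _ => ?_
    rw [← Matrix.mulVec_mulVec, Matrix.dotProduct_mulVec, Matrix.vecMul_conjTranspose,
      star_star]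
    simp only [dotProduct, Pi.star_apply]
    refine Finset.sum_congr rfl fun k _ => ?_
    rw [← starRingEnd_apply]
    exact Complex.normSq_eq_conj_mul_self.symm
  have hQFpos : ∀ (φ : ↥K ≃ₐ[ℚ] ↥K) (z : Fin n → ℂ), z ≠ 0 →
      0 < ∑ g : G, ∑ k, Complex.normSq (((A g).map (emb φ)).mulVec z k) := by
    intro φ z hz
    have h1 : ∀ g : G, (0:ℝ) ≤ ∑ k, Complex.normSq (((A g).map (emb φ)).mulVec z k) :=
      fun g => Finset.sum_nonneg fun k _ => Complex.normSq_nonneg _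
    have h2 : 0 < ∑ k, Complex.normSq (((A 1).map (emb φ)).mulVec z k) := by
      rw [hA1]
      have hone : (1 : Matrix (Fin n) (Fin n) ↥K).map (emb φ) = 1 :=
        Matrix.map_one _ (map_zero _) (map_one _)
      rw [hone, Matrix.one_mulVec]
      obtain ⟨k, hk⟩ : ∃ k, z k ≠ 0 := by
        by_contra hcon; push_neg at hcon; exact hz (funext hcon)
      exact Finset.sum_pos' (fun k _ => Complex.normSq_nonneg _)
        ⟨k, Finset.mem_univ k, Complex.normSq_pos.mpr hk⟩
    exact Finset.sum_pos' (fun g _ => h1 g) ⟨1, Finset.mem_univ 1, h2⟩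
  have hzne : ∀ (φ : ↥K ≃ₐ[ℚ] ↥K) (x : Fin n → ↥K), x ≠ 0 →
      (fun i => emb φ (x i)) ≠ 0 := by
    intro φ x hx hcon
    apply hx
    funext i
    have := congrFun hcon i
    simp only [Pi.zero_apply] at this ⊢
    exact (emb φ).injective (by rw [this, map_zero])
  -- M₀ is invertible
  have hM₀det : IsUnit M₀.det := by
    rw [isUnit_iff_ne_zero]
    intro hdet
    obtain ⟨x, hx0, hx⟩ := (Matrix.exists_mulVec_eq_zero_iff).mpr hdet
    have hz := hQF0 1 (fun i => emb 1 (x i))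
    rw [← hmapvec, hx] at hz
    have h0 : (fun i => emb 1 ((0 : Fin n → ↥K) i)) = 0 := by
      funext i; simp
    rw [h0, dotProduct_zero] at hz
    have := hQFpos 1 (fun i => emb 1 (x i)) (hzne 1 x hx0)
    rw [← Complex.ofReal_zero] at hz
    have := this.ne'
    exact this (Complex.ofReal_injective hz.symm)
  -- the commutant argument
  have hcomm : ∀ g : G, (M₀⁻¹ * M) * A g = A g * (M₀⁻¹ * M) := by
    intro g
    have h2 : ((A g).map ⇑sr)ᵀ * M₀ = M₀ * A g⁻¹ := by
      calc ((A g).map ⇑sr)ᵀ * M₀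
          = ((A g).map ⇑sr)ᵀ * M₀ * (A g * A g⁻¹) := by rw [hAu1 g, mul_one]
        _ = (((A g).map ⇑sr)ᵀ * M₀ * A g) * A g⁻¹ := by rw [mul_assoc, mul_assoc, mul_assoc]
        _ = M₀ * A g⁻¹ := by rw [M₀inv g]
    have h3 : ((A g).map ⇑sr)ᵀ = M₀ * A g⁻¹ * M₀⁻¹ := by
      calc ((A g).map ⇑sr)ᵀ = ((A g).map ⇑sr)ᵀ * M₀ * M₀⁻¹ := by
            rw [Matrix.mul_nonsing_inv_cancel_right _ _ hM₀det]
        _ = M₀ * A g⁻¹ * M₀⁻¹ := by rw [h2]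
    have h4 := Minv g
    rw [h3] at h4
    have h5 : A g⁻¹ * (M₀⁻¹ * M * A g) = M₀⁻¹ * M := by
      calc A g⁻¹ * (M₀⁻¹ * M * A g)
          = M₀⁻¹ * (M₀ * (A g⁻¹ * (M₀⁻¹ * M * A g))) := by
            rw [Matrix.nonsing_inv_mul_cancel_left _ _ hM₀det]
        _ = M₀⁻¹ * (M₀ * A g⁻¹ * M₀⁻¹ * M * A g) := by
            simp only [mul_assoc]
        _ = M₀⁻¹ * M := by rw [h4]
    calc (M₀⁻¹ * M) * A g = (A g * A g⁻¹) * ((M₀⁻¹ * M) * A g) := by rw [hAu1 g, one_mul]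
      _ = A g * (M₀⁻¹ * M) := by rw [mul_assoc, h5]
  -- Schur's lemma: M = c • M₀
  obtain ⟨c, hc⟩ := hSchur (Matrix.toLin' (M₀⁻¹ * M)) (by
    intro g
    have hρ : ρ g = Matrix.toLin' (A g) := by rw [hA, Matrix.toLin'_toMatrix']
    rw [hρ, ← Matrix.toLin'_mul, ← Matrix.toLin'_mul, hcomm g])
  have h6 : M₀⁻¹ * M = c • (1 : Matrix (Fin n) (Fin n) ↥K) := by
    have h7 := congrArg LinearMap.toMatrix' hc
    rwa [LinearMap.toMatrix'_toLin', _root_.map_smul, LinearMap.toMatrix'_id] at h7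
  have hMc : M = c • M₀ := by
    calc M = M₀ * (M₀⁻¹ * M) := (Matrix.mul_nonsing_inv_cancel_left _ _ hM₀det).symm
      _ = M₀ * (c • 1) := by rw [h6]
      _ = c • M₀ := by rw [mul_smul_comm, mul_one]
  -- evaluating the forms
  have hMmap : ∀ φ : ↥K ≃ₐ[ℚ] ↥K, M.map (emb φ) = emb φ c • M₀.map (emb φ) := by
    intro φ
    refine Matrix.ext fun i j => ?_
    rw [hMc]
    simp only [Matrix.map_apply, Matrix.smul_apply, smul_eq_mul, _root_.map_mul]
  have hQval : ∀ (φ : ↥K ≃ₐ[ℚ] ↥K) (x : Fin n → ↥K),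
      emb φ (B x x) = emb φ c *
        ((∑ g : G, ∑ k, Complex.normSq
          (((A g).map (emb φ)).mulVec (fun i => emb φ (x i)) k) : ℝ) : ℂ) := by
    intro φ x
    rw [hQ1, hMmap, Matrix.smul_mulVec, dotProduct_smul, smul_eq_mul, hQF0]
  have hqc : ∀ φ : ↥K ≃ₐ[ℚ] ↥K, emb φ (B v v) = (q : ℂ) := by
    intro φ
    rw [hBvv, eq_ratCast (algebraMap ℚ ↥K) q, map_ratCast]
  -- the positivity of each conjugate
  have hconj : ∀ φ : ↥K ≃ₐ[ℚ] ↥K, 0 < (emb φ (B u u)).re := by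
    intro φ
    have hrvpos := hQFpos φ _ (hzne φ v hv0)
    have hrupos := hQFpos φ _ (hzne φ u hu0)
    have h8 := (hQval φ v).symm.trans (hqc φ)
    have h10 := hQval φ u
    revert hrvpos hrupos h8 h10
    generalize (∑ g : G, ∑ k, Complex.normSq
      (((A g).map (emb φ)).mulVec (fun i => emb φ (v i)) k)) = rv
    generalize (∑ g : G, ∑ k, Complex.normSq
      (((A g).map (emb φ)).mulVec (fun i => emb φ (u i)) k)) = ru
    intro hrvpos hrupos h8 h10
    rw [h10]
    have hrvne : ((rv:ℝ):ℂ) ≠ 0 := by exact_mod_cast hrvpos.ne'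
    have h9 : emb φ c = (q : ℂ) / (rv : ℂ) := by
      rw [eq_div_iff hrvne]
      exact h8
    rw [h9]
    have h11 : (q:ℂ) / (rv:ℂ) * (ru:ℂ) = (((q:ℝ) * ru / rv : ℝ) : ℂ) := by
      push_cast
      ring
    rw [h11, Complex.ofReal_re]
    have hq' : (0:ℝ) < (q:ℝ) := by exact_mod_cast hq
    positivity
  -- conclude via the trace
  have hsum : algebraMap ℚ ℂ (Algebra.trace ℚ ↥K (B u u))
      = ∑ φ : ↥K ≃ₐ[ℚ] ↥K, emb φ (B u u) := by
    rw [IsScalarTower.algebraMap_apply ℚ ↥K ℂ, trace_eq_sum_automorphisms, map_sum]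
    rfl
  have hre : 0 < (algebraMap ℚ ℂ (Algebra.trace ℚ ↥K (B u u))).re := by
    rw [hsum, Complex.re_sum]
    exact Finset.sum_pos (fun φ _ => hconj φ) Finset.univ_nonempty
  rw [eq_ratCast (algebraMap ℚ ℂ), Complex.ratCast_re] at hre
  exact_mod_cast hre

/-- Let `K ⊂ ℂ` be the (abelian) character field of an absolutely irreducible `K`-form `ρ` of
a complex irreducible representation `V` with `dim V^H = 1`, let `B` be a `G`-invariant
`K`-valued Hermitian product (with respect to the restriction `σ` of complex conjugation) on
`V_K = K^n` such that `B(v,v) = q ∈ ℚ_{>0}` for a fixed nonzero `H`-fixed vector `v`, and let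
`W` be the Galois-diagonal set with `G`-action `Θ` and `S(w₁,w₂) = Tr_{K/ℚ}(B(v₁,v₂))`.
Then `S` is a `G`-invariant positive definite symmetric `ℚ`-bilinear form on `W`, and for
`w = (φ(v_i))_φ` and any `g ∈ G`:
`S(w, g·w) = ((v,v)/|H|) · ∑_{h∈H} Tr_{K/ℚ}(χ_V(h g⁻¹))`. -/
theorem stmt_18 (G : Type) [Group G] [Fintype G] (H : Subgroup G) [DecidablePred (· ∈ H)]
    (K : IntermediateField ℚ ℂ) [FiniteDimensional ℚ ↥K] [IsGalois ℚ ↥K]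
    (habelian : ∀ φ ψ : ↥K ≃ₐ[ℚ] ↥K, φ * ψ = ψ * φ)
    (n : ℕ) (ρ : Representation ↥K G (Fin n → ↥K))
    (hSchur : ∀ f : (Fin n → ↥K) →ₗ[↥K] (Fin n → ↥K),
      (∀ g : G, f ∘ₗ (ρ g) = (ρ g) ∘ₗ f) → ∃ c : ↥K, f = c • LinearMap.id)
    (σ : ↥K ≃ₐ[ℚ] ↥K) (hσ : ∀ x : ↥K, ((σ x : ↥K) : ℂ) = starRingEnd ℂ (x : ℂ))
    (B : (Fin n → ↥K) → (Fin n → ↥K) → ↥K)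
    (hBadd : ∀ x y z, B x (y + z) = B x y + B x z)
    (hBsmul : ∀ (c : ↥K) (x y), B x (c • y) = c * B x y)
    (hBherm : ∀ x y, B y x = σ (B x y))
    (hBpos : ∀ x, x ≠ 0 → 0 < ((B x x : ↥K) : ℂ).re)
    (hBinv : ∀ (g : G) (x y), B (ρ g x) (ρ g y) = B x y)
    (hfix : Module.finrank ↥K
      ↥(⨅ h : H, LinearMap.eqLocus (ρ (h : G)) (LinearMap.id : (Fin n → ↥K) →ₗ[↥K] (Fin n → ↥K))) = 1)
    (v : Fin n → ↥K) (hv0 : v ≠ 0) (hvH : ∀ h : G, h ∈ H → ρ h v = v)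
    (q : ℚ) (hq : 0 < q) (hBvv : B v v = algebraMap ℚ ↥K q)
    (Θ : G → (((↥K ≃ₐ[ℚ] ↥K) → Fin n → ↥K) → ((↥K ≃ₐ[ℚ] ↥K) → Fin n → ↥K)))
    (hΘ : ∀ (g : G) (f : (↥K ≃ₐ[ℚ] ↥K) → Fin n → ↥K) (φ : ↥K ≃ₐ[ℚ] ↥K) (i : Fin n),
      Θ g f φ i = φ ((ρ g) (fun j => φ.symm (f φ j)) i))
    (D : Set ((↥K ≃ₐ[ℚ] ↥K) → Fin n → ↥K))
    (hD : D = {f | ∃ u : Fin n → ↥K, ∀ (φ : ↥K ≃ₐ[ℚ] ↥K) (i : Fin n), f φ i = φ (u i)})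
    (S : ((↥K ≃ₐ[ℚ] ↥K) → Fin n → ↥K) → ((↥K ≃ₐ[ℚ] ↥K) → Fin n → ↥K) → ℚ)
    (hS : ∀ f₁ f₂, S f₁ f₂ = Algebra.trace ℚ ↥K (B (f₁ 1) (f₂ 1)))
    (w : (↥K ≃ₐ[ℚ] ↥K) → Fin n → ↥K)
    (hw : ∀ (φ : ↥K ≃ₐ[ℚ] ↥K) (i : Fin n), w φ i = φ (v i)) :
    (∀ f₁ f₂, f₁ ∈ D → f₂ ∈ D → S f₁ f₂ = S f₂ f₁) ∧
    (∀ f₁ f₂ f₃, S f₁ (f₂ + f₃) = S f₁ f₂ + S f₁ f₃) ∧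
    (∀ f₁ f₂ f₃, S (f₁ + f₂) f₃ = S f₁ f₃ + S f₂ f₃) ∧
    (∀ (c : ℚ) (f₁ f₂), S f₁ (c • f₂) = c * S f₁ f₂) ∧
    (∀ (g : G) (f₁ f₂), f₁ ∈ D → f₂ ∈ D → S (Θ g f₁) (Θ g f₂) = S f₁ f₂) ∧
    (∀ f, f ∈ D → f ≠ 0 → 0 < S f f) ∧
    (∀ g : G, S w (Θ g w) = (q / (Fintype.card H : ℚ)) *
      ∑ h : H, Algebra.trace ℚ ↥K
        (LinearMap.trace ↥K (Fin n → ↥K) (ρ ((h : G) * g⁻¹)))) := by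
  -- basic consequences of the hypotheses on B
  have hBaddl : ∀ x y z, B (x + y) z = B x z + B y z := by
    intro x y z
    rw [hBherm, hBadd, map_add, ← hBherm, ← hBherm]
  have hBsmull : ∀ (c : ↥K) (x y), B (c • x) y = σ c * B x y := by
    intro c x y
    rw [hBherm y (c • x), hBsmul, _root_.map_mul, ← hBherm y x]
  -- B as a linear map in the second variable
  set BL : (Fin n → ↥K) → (Fin n → ↥K) →ₗ[↥K] ↥K := fun x =>
    { toFun := B x, map_add' := hBadd x, map_smul' := fun c y => hBsmul c x y } with hBL
  have hBLapp : ∀ x y, BL x y = B x y := fun x y => rfl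
  -- Θ g f at the identity automorphism
  have hθ1 : ∀ (g : G) (f : (↥K ≃ₐ[ℚ] ↥K) → Fin n → ↥K), Θ g f 1 = ρ g (f 1) := by
    intro g f
    funext i
    rw [hΘ g f 1 i]
    rfl
  have hw1 : w 1 = v := by
    funext i
    rw [hw 1 i]
    rfl
  -- trace is invariant under σ
  have trσ : ∀ x : ↥K, Algebra.trace ℚ ↥K (σ x) = Algebra.trace ℚ ↥K x :=
    fun x => trace_aut' σ x
  refine ⟨?_, ?_, ?_, ?_, ?_, ?_, ?_⟩
  · -- symmetry
    intro f₁ f₂ _ _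
    rw [hS, hS, hBherm, trσ]
  · intro f₁ f₂ f₃
    rw [hS, hS, hS]
    have : (f₂ + f₃) 1 = f₂ 1 + f₃ 1 := rfl
    rw [this, hBadd, _root_.map_add]
  · intro f₁ f₂ f₃
    rw [hS, hS, hS]
    have : (f₁ + f₂) 1 = f₁ 1 + f₂ 1 := rfl
    rw [this, hBaddl, _root_.map_add]
  · intro c f₁ f₂
    rw [hS, hS]
    have h1 : (c • f₂) 1 = (algebraMap ℚ ↥K c) • f₂ 1 :=
      (algebraMap_smul ↥K c (f₂ 1)).symm
    rw [h1, hBsmul, ← Algebra.smul_def, _root_.map_smul, smul_eq_mul]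
  · intro g f₁ f₂ _ _
    rw [hS, hS, hθ1, hθ1, hBinv]
  · -- positivity
    intro f hf hf0
    rw [hD] at hf
    obtain ⟨u, hu⟩ := hf
    have hf1 : f 1 = u := by
      funext i
      rw [hu 1 i]
      rfl
    have hu0 : u ≠ 0 := by
      intro h0
      apply hf0
      funext φ i
      rw [hu φ i, h0]
      simp
    rw [hS, hf1]
    exact keypos G K habelian n ρ hSchur σ hσ B hBadd hBsmul hBherm hBinv v hv0 q hq hBvv u hu0
  · -- character formula
    intro g
    classical
    set N := ⨅ h : H, LinearMap.eqLocus (ρ (h : G))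
      (LinearMap.id : (Fin n → ↥K) →ₗ[↥K] (Fin n → ↥K)) with hN
    have hvN : v ∈ N := by
      rw [hN]
      exact (Submodule.mem_iInf _).mpr fun h => hvH h h.2
    have hNspan : Submodule.span ↥K {v} = N := by
      apply Submodule.eq_of_le_of_finrank_le
      · rw [Submodule.span_le, Set.singleton_subset_iff]; exact hvN
      · rw [hfix, finrank_span_singleton hv0]
    set P : (Fin n → ↥K) →ₗ[↥K] (Fin n → ↥K) := ∑ h : H, ρ (h : G) with hP
    have hPapp : ∀ x, P x = ∑ h : H, ρ (h : G) x := by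
      intro x; rw [hP]; simp
    have hPmem : ∀ x, P x ∈ N := by
      intro x
      rw [hN]
      refine (Submodule.mem_iInf _).mpr fun h' => ?_
      show ρ (h' : G) (P x) = LinearMap.id (P x)
      have h1 : ρ (h' : G) (P x) = ∑ h : H, ρ (((h' * h : H) : G)) x := by
        rw [hPapp, map_sum]
        refine Finset.sum_congr rfl fun h _ => ?_
        rw [Subgroup.coe_mul, map_mul ρ]
        rfl
      have h2 : ∑ h : H, ρ (((h' * h : H) : G)) x = ∑ h : H, ρ (h : G) x :=
        Fintype.sum_equiv (Equiv.mulLeft h') _ _ (fun h => rfl)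
      rw [h1, h2, hPapp]
      rfl
    have hq0 : algebraMap ℚ ↥K q ≠ 0 := fun hcon => hq.ne'
      ((algebraMap ℚ ↥K).injective (by rw [hcon, map_zero]))
    have hBvP : ∀ x, B v (P x) = (Fintype.card H : ↥K) * B v x := by
      intro x
      rw [hPapp, ← hBLapp, map_sum]
      have h3 : ∀ h : H, BL v (ρ (h : G) x) = B v x := by
        intro h
        have h4 := hBinv (h : G) v x
        rw [hvH _ h.2] at h4
        exact h4
      rw [Finset.sum_congr rfl fun h _ => h3 h]
      rw [Finset.sum_const, Finset.card_univ, nsmul_eq_mul]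
    have hPv : ∀ x : Fin n → ↥K,
        P x = ((algebraMap ℚ ↥K q)⁻¹ * ((Fintype.card H : ↥K) * B v x)) • v := by
      intro x
      obtain ⟨c, hc⟩ := Submodule.mem_span_singleton.mp (hNspan ▸ hPmem x)
      have h2 : B v (P x) = c * algebraMap ℚ ↥K q := by
        rw [← hc, hBsmul, hBvv]
      have h3 : c = (algebraMap ℚ ↥K q)⁻¹ * ((Fintype.card H : ↥K) * B v x) := by
        rw [hBvP] at h2
        rw [h2, mul_comm c, ← mul_assoc, inv_mul_cancel₀ hq0, one_mul]
      rw [← hc, h3]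
    set lam : (Fin n → ↥K) →ₗ[↥K] ↥K :=
      ((algebraMap ℚ ↥K q)⁻¹ * (Fintype.card H : ↥K)) • (BL v ∘ₗ ρ g⁻¹) with hlam
    have hT : (P ∘ₗ ρ g⁻¹) = LinearMap.smulRight lam v := by
      refine LinearMap.ext fun x => ?_
      show P (ρ g⁻¹ x) = lam x • v
      rw [hPv, hlam]
      simp only [LinearMap.smul_apply, LinearMap.comp_apply, smul_eq_mul]
      rw [hBLapp, mul_assoc]
    have htr : ∑ h : H, LinearMap.trace ↥K (Fin n → ↥K) (ρ ((h : G) * g⁻¹))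
        = (algebraMap ℚ ↥K q)⁻¹ * (Fintype.card H : ↥K) * B v (ρ g⁻¹ v) := by
      have h1 : ∀ h : H, ρ ((h : G) * g⁻¹) = ρ (h : G) * ρ g⁻¹ :=
        fun h => map_mul ρ _ _
      rw [Finset.sum_congr rfl fun h _ => by rw [h1 h]]
      rw [← map_sum, ← Finset.sum_mul, ← hP, Module.End.mul_eq_comp, hT, trace_rankone', hlam]
      simp only [LinearMap.smul_apply, LinearMap.comp_apply, smul_eq_mul]
      rw [hBLapp, mul_assoc]
    have hρinv : ρ g (ρ g⁻¹ v) = v := by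
      rw [← Module.End.mul_apply, ← map_mul ρ, mul_inv_cancel, _root_.map_one, Module.End.one_apply]
    have hflip : B v (ρ g⁻¹ v) = σ (B v (ρ g v)) := by
      calc B v (ρ g⁻¹ v) = B (ρ g v) (ρ g (ρ g⁻¹ v)) := (hBinv g v _).symm
      _ = B (ρ g v) v := by rw [hρinv]
      _ = σ (B v (ρ g v)) := hBherm _ _
    have hcard0 : (Fintype.card H : ℚ) ≠ 0 := by
      exact_mod_cast (Fintype.card_pos (α := H)).ne'
    rw [hS, hθ1, hw1, ← map_sum (Algebra.trace ℚ ↥K), htr]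
    have hsc : (algebraMap ℚ ↥K q)⁻¹ * (Fintype.card H : ↥K) * B v (ρ g⁻¹ v)
        = (q⁻¹ * (Fintype.card H : ℚ)) • B v (ρ g⁻¹ v) := by
      rw [Algebra.smul_def, _root_.map_mul, map_inv₀, map_natCast]
    rw [hsc, _root_.map_smul, smul_eq_mul, hflip, trσ]
    field_simp
end
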